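/- Fix natural numbers ℓ, m, p, q with 2 ≤ ℓ, ℓ < m, 1 ≤ p, p < q; set n := p*(ℓ−1) + q*(m−1) + 2 and let r := (ℓ : ℝ) + m + (2 − p − q)/q. Define N(L) := Nat.card {(a,b) : ℤ × ℤ | (|a| : ℝ) ≤ L^ℓ ∧ (|b| : ℝ) ≤ L^m ∧ ((|a|^p * |b|^q : ℤ) : ℝ) ≤ L^n}. Then the function L ↦ Real.log (N(L)) / Real.log L tends to r as L → ∞ (Filter.Tendsto along Filter.atTop to the neighborhood filter of r). -/

import Mathlib

set_option maxHeartbeats 1000000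

open Real Finset

lemma sum_rpow_neg_le (s : ℝ) (hs0 : 0 ≤ s) (hs1 : s < 1) (U : ℕ) :
    ∑ u ∈ Finset.Icc 1 U, ((u : ℝ)) ^ (-s) ≤ 1 + (U : ℝ) ^ (1 - s) / (1 - s) := by
  have ht : 0 < 1 - s := by linarith
  induction U with
  | zero =>
    simp only [Finset.Icc_eq_empty_of_lt (by norm_num : (0:ℕ) < 1), Finset.sum_empty]
    rw [Nat.cast_zero, Real.zero_rpow (by linarith)]
    positivity
  | succ U ih =>
    rw [Finset.sum_Icc_succ_top (by omega : 1 ≤ U + 1)]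
    have key : ((U + 1 : ℕ) : ℝ) ^ (-s) ≤ (((U+1 : ℕ) : ℝ) ^ (1-s) - (U:ℝ) ^ (1-s)) / (1 - s) := by
      have hW : (0:ℝ) < ((U+1 : ℕ) : ℝ) := by positivity
      -- Bernoulli: (1 + x)^(1-s) ≤ 1 + (1-s) x  with x = -1/(U+1)
      have hb := rpow_one_add_le_one_add_mul_self
        (s := -1 / ((U+1:ℕ):ℝ)) (p := 1 - s)
        (by
          have h1 : (1:ℝ) ≤ ((U+1:ℕ):ℝ) := by exact_mod_cast Nat.one_le_iff_ne_zero.mpr (Nat.succ_ne_zero U)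
          rw [le_div_iff₀ hW]; nlinarith) (by linarith) (by linarith)
      have hx : (1 : ℝ) + -1 / ((U+1:ℕ):ℝ) = (U:ℝ) / ((U+1:ℕ):ℝ) := by
        have hc : ((U+1:ℕ):ℝ) = (U:ℝ)+1 := by push_cast; ring
        rw [hc]; field_simp; ring
      rw [hx] at hb
      have hdiv : ((U:ℝ) / ((U+1:ℕ):ℝ)) ^ (1-s) = (U:ℝ) ^ (1-s) / ((U+1:ℕ):ℝ) ^ (1-s) :=
        Real.div_rpow (by positivity) hW.le (1-s)
      rw [hdiv] at hb
      have hWpow : (0:ℝ) < ((U+1:ℕ):ℝ) ^ (1-s) := Real.rpow_pos_of_pos hW _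
      rw [div_le_iff₀ hWpow] at hb
      rw [le_div_iff₀ ht]
      have hmul : ((U+1:ℕ):ℝ) ^ (-s) * ((U+1:ℕ):ℝ) = ((U+1:ℕ):ℝ) ^ (1-s) := by
        rw [show (1:ℝ)-s = 1 + (-s) by ring, Real.rpow_one_add' hW.le (by linarith), mul_comm]
      have hinv : ((U+1:ℕ):ℝ) ^ (1-s) / ((U+1:ℕ):ℝ) = ((U+1:ℕ):ℝ) ^ (-s) := by
        rw [eq_comm, eq_div_iff hW.ne']; exact hmul
      have e : (1 + (1-s) * (-1 / ((U+1:ℕ):ℝ))) * ((U+1:ℕ):ℝ) ^ (1-s)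
          = ((U+1:ℕ):ℝ) ^ (1-s) - (1-s) * ((U+1:ℕ):ℝ) ^ (-s) := by
        rw [← hinv]; field_simp; ring
      rw [e] at hb
      linarith
    calc ∑ u ∈ Finset.Icc 1 U, ((u : ℝ)) ^ (-s) + ((U + 1 : ℕ) : ℝ) ^ (-s)
        ≤ (1 + (U : ℝ) ^ (1 - s) / (1 - s)) + (((U+1 : ℕ) : ℝ) ^ (1-s) - (U:ℝ) ^ (1-s)) / (1 - s) :=
          add_le_add ih key
      _ = 1 + ((U+1 : ℕ) : ℝ) ^ (1 - s) / (1 - s) := by ring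


lemma count_bounds (ℓ m p q n : ℕ) (hℓ : 2 ≤ ℓ) (hlm : ℓ < m) (hp : 1 ≤ p) (hpq : p < q)
    (hn : n = p * (ℓ - 1) + q * (m - 1) + 2) (L : ℝ) (hL : 2 ≤ L) :
    L ^ ((ℓ:ℝ) + ((n:ℝ) - (p:ℝ)*(ℓ:ℝ))/(q:ℝ))
      ≤ (Nat.card {ab : ℤ × ℤ | (|ab.1| : ℝ) ≤ L ^ ℓ ∧ (|ab.2| : ℝ) ≤ L ^ m ∧
          ((|ab.1| ^ p * |ab.2| ^ q : ℤ) : ℝ) ≤ L ^ n} : ℝ) ∧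
    (Nat.card {ab : ℤ × ℤ | (|ab.1| : ℝ) ≤ L ^ ℓ ∧ (|ab.2| : ℝ) ≤ L ^ m ∧
          ((|ab.1| ^ p * |ab.2| ^ q : ℤ) : ℝ) ≤ L ^ n} : ℝ)
      ≤ (9 + 4/(1-(p:ℝ)/(q:ℝ))) * L ^ ((n:ℝ)/(q:ℝ) + (ℓ:ℝ)*(1-(p:ℝ)/(q:ℝ))) := by
  have hL1 : (1:ℝ) ≤ L := by linarith
  have hL0 : (0:ℝ) < L := by linarith
  have hq0 : (0:ℝ) < q := by exact_mod_cast (by omega : 0 < q)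
  set s : ℝ := (p:ℝ)/(q:ℝ) with hs
  have e1 : p * (ℓ-1) + p = p * ℓ := by
    have h : ℓ - 1 + 1 = ℓ := by omega
    calc p * (ℓ-1) + p = p * (ℓ - 1 + 1) := by ring
      _ = p * ℓ := by rw [h]
  have e2 : q * (m-1) + q = q * m := by
    have h : m - 1 + 1 = m := by omega
    calc q * (m-1) + q = q * (m - 1 + 1) := by ring
      _ = q * m := by rw [h]
  have e3 : q ≤ q * (m-1) := Nat.le_mul_of_pos_right q (by omega)
  have hp0 : (0:ℝ) < p := by exact_mod_cast (by omega : 0 < p)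
  have hs0 : (0:ℝ) < s := by rw [hs]; positivity
  have hs1 : s < 1 := by rw [hs, div_lt_one hq0]; exact_mod_cast hpq
  have hpR : (1:ℝ) ≤ (p:ℝ) := by exact_mod_cast hp
  have hqR : (p:ℝ) + 1 ≤ (q:ℝ) := by exact_mod_cast hpq
  have hlR : (2:ℝ) ≤ (ℓ:ℝ) := by exact_mod_cast hℓ
  have hmR : (ℓ:ℝ) + 1 ≤ (m:ℝ) := by exact_mod_cast hlm
  have hNcast : (n:ℝ) + p + q = p*ℓ + q*m + 2 := by
    exact_mod_cast congrArg (Nat.cast : ℕ → ℝ) (show n + p + q = p*ℓ + q*m + 2 by omega)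
  set er : ℝ := (n:ℝ)/q + (ℓ:ℝ)*(1-s) with her
  have hform : er = ((n:ℝ) + (ℓ:ℝ)*q - (ℓ:ℝ)*p)/q := by
    rw [her, hs]; field_simp; ring
  have hm_le : (m:ℝ) ≤ er := by
    rw [hform, le_div_iff₀ hq0]
    nlinarith [mul_nonneg (show (0:ℝ) ≤ (ℓ:ℝ)-2 by linarith) hq0.le]
  have hq_le : (n:ℝ)/q ≤ er := by
    rw [her]
    have : (0:ℝ) ≤ (ℓ:ℝ)*(1-s) := mul_nonneg (by positivity) (by linarith)
    linarith
  have hl_le : (ℓ:ℝ) ≤ er := by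
    rw [hform, le_div_iff₀ hq0]
    nlinarith [mul_nonneg (show (0:ℝ) ≤ (m:ℝ)-2 by linarith) hq0.le]
  have h0_le : (0:ℝ) ≤ er := le_trans (by positivity) hm_le
  have bm : L^(m:ℕ) ≤ L^er := by
    rw [← Real.rpow_natCast L m]; exact Real.rpow_le_rpow_of_exponent_le hL1 hm_le
  have bq : L^((n:ℝ)/q) ≤ L^er := Real.rpow_le_rpow_of_exponent_le hL1 hq_le
  have bl : L^(ℓ:ℕ) ≤ L^er := by
    rw [← Real.rpow_natCast L ℓ]; exact Real.rpow_le_rpow_of_exponent_le hL1 hl_le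
  have b1 : (1:ℝ) ≤ L^er := Real.one_le_rpow hL1 h0_le
  have bmain : L^((n:ℝ)/q) * (L^(ℓ:ℕ))^(1-s) = L^er := by
    rw [← Real.rpow_natCast L ℓ, ← Real.rpow_mul hL0.le, ← Real.rpow_add hL0, her]
  have hone_minus : (0:ℝ) < 1 - s := by linarith
  set S : Set (ℤ × ℤ) := {ab : ℤ × ℤ | (|ab.1| : ℝ) ≤ L ^ ℓ ∧ (|ab.2| : ℝ) ≤ L ^ m ∧
          ((|ab.1| ^ p * |ab.2| ^ q : ℤ) : ℝ) ≤ L ^ n} with hS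
  set A : ℤ := ⌊L ^ ℓ⌋ with hA
  set B : ℤ := ⌊L ^ m⌋ with hB
  have hA1 : 1 ≤ A := by
    rw [hA, Int.le_floor]; exact_mod_cast one_le_pow₀ hL1
  have hB1 : 1 ≤ B := by
    rw [hB, Int.le_floor]; exact_mod_cast one_le_pow₀ hL1
  have hSsub : S ⊆ ↑(Finset.Icc (-A) A ×ˢ Finset.Icc (-B) B) := by
    rintro ⟨a, b⟩ ⟨h1, h2, h3⟩
    simp only [Finset.coe_product, Set.mem_prod, Finset.mem_coe, Finset.mem_Icc]
    constructor
    · have : |a| ≤ A := by rw [hA, Int.le_floor]; exact_mod_cast h1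
      exact abs_le.mp this
    · have : |b| ≤ B := by rw [hB, Int.le_floor]; exact_mod_cast h2
      exact abs_le.mp this
  have hfin : S.Finite := Set.Finite.subset (Finset.Icc (-A) A ×ˢ Finset.Icc (-B) B).finite_toSet hSsub
  set T : Finset (ℤ × ℤ) := hfin.toFinset with hT
  have hTmem : ∀ ab : ℤ × ℤ, ab ∈ T ↔ ab ∈ S := fun ab => hfin.mem_toFinset
  have hcard : Nat.card S = T.card := by
    rw [Nat.card_coe_set_eq, Set.ncard_eq_toFinset_card _ hfin]
  -- ===== lower bound =====
  have hnp : (0:ℝ) ≤ ((n:ℝ) - p*ℓ)/q := by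
    apply div_nonneg _ hq0.le
    have h1 : p * ℓ ≤ n := by omega
    have := (Nat.cast_le (α := ℝ)).2 h1
    push_cast at this ⊢
    linarith
  have hbm : ((n:ℝ) - p*ℓ)/q ≤ (m:ℝ) := by
    rw [div_le_iff₀ hq0]
    have h1 : n ≤ p * ℓ + q * m := by omega
    have := (Nat.cast_le (α := ℝ)).2 h1
    push_cast at this ⊢
    nlinarith [this]
  set e : ℝ := ((n:ℝ) - p*ℓ)/q with he
  set B' : ℤ := ⌊L ^ e⌋ with hB'
  have hLe1 : (1:ℝ) ≤ L ^ e := Real.one_le_rpow hL1 hnp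
  have hB'1 : 1 ≤ B' := by rw [hB', Int.le_floor]; exact_mod_cast hLe1
  have hsub' : (Finset.Icc (-A) A ×ˢ Finset.Icc (-B') B') ⊆ T := by
    rintro ⟨a, b⟩ hmem
    rw [Finset.mem_product, Finset.mem_Icc, Finset.mem_Icc] at hmem
    obtain ⟨ha, hb⟩ := hmem
    have ha' : |a| ≤ A := abs_le.mpr ha
    have hb' : |b| ≤ B' := abs_le.mpr hb
    have haR : ((|a| : ℤ) : ℝ) ≤ L ^ ℓ := le_trans (by exact_mod_cast ha') (Int.floor_le _)
    have hbR : ((|b| : ℤ) : ℝ) ≤ L ^ e := le_trans (by exact_mod_cast hb') (Int.floor_le _)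
    have hmem2 : ((|b| : ℤ) : ℝ) ≤ L ^ m := by
      calc ((|b| : ℤ) : ℝ) ≤ L ^ e := hbR
        _ ≤ L ^ (m:ℝ) := Real.rpow_le_rpow_of_exponent_le hL1 hbm
        _ = L ^ m := Real.rpow_natCast L m
    have hmem3 : ((|a| ^ p * |b| ^ q : ℤ) : ℝ) ≤ L ^ n := by
      have hprod : ((|a| ^ p * |b| ^ q : ℤ) : ℝ) = ((|a|:ℤ):ℝ)^p * ((|b|:ℤ):ℝ)^q := by push_cast; ring
      have h1 : ((|a|:ℤ):ℝ)^p ≤ (L ^ ℓ)^p := pow_le_pow_left₀ (by positivity) haR p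
      have h2 : ((|b|:ℤ):ℝ)^q ≤ (L ^ e)^q := pow_le_pow_left₀ (by positivity) hbR q
      have hkey : (L ^ ℓ)^p * (L ^ e)^q = L ^ n := by
        rw [← pow_mul, ← Real.rpow_natCast (L ^ e) q, ← Real.rpow_mul hL0.le, he,
          div_mul_cancel₀ _ hq0.ne', ← Real.rpow_natCast L (ℓ*p), ← Real.rpow_add hL0,
          ← Real.rpow_natCast L n]
        congr 1
        push_cast
        ring
      rw [hprod, ← hkey]
      exact mul_le_mul h1 h2 (by positivity) (by positivity)
    rw [hTmem]
    simp only [hS, Set.mem_setOf_eq]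
    refine ⟨?_, ?_, hmem3⟩
    · rw [← Int.cast_abs]; exact haR
    · rw [← Int.cast_abs]; exact hmem2
  have ncast : ∀ x : ℤ, 0 ≤ x → ((x.toNat : ℕ) : ℝ) = (x : ℝ) := fun x hx => by
    exact_mod_cast congrArg (Int.cast : ℤ → ℝ) (Int.toNat_of_nonneg hx)
  have hlow : L ^ ((ℓ:ℝ) + e) ≤ (T.card : ℝ) := by
    have hc : ((Finset.Icc (-A) A ×ˢ Finset.Icc (-B') B').card : ℝ)
        = ((2*A+1 : ℤ) : ℝ) * ((2*B'+1 : ℤ) : ℝ) := by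
      rw [Finset.card_product, Int.card_Icc, Int.card_Icc, Nat.cast_mul,
        ncast _ (by omega), ncast _ (by omega)]
      push_cast
      ring
    have h1 : L ^ (ℓ:ℕ) ≤ ((2*A+1 : ℤ) : ℝ) := by
      have := Int.lt_floor_add_one (L ^ ℓ)
      have h2 : (1:ℝ) ≤ L ^ (ℓ:ℕ) := one_le_pow₀ hL1
      push_cast
      rw [hA]
      linarith
    have h2 : L ^ e ≤ ((2*B'+1 : ℤ) : ℝ) := by
      have := Int.lt_floor_add_one (L ^ e)
      push_cast
      rw [hB']
      linarith
    calc L ^ ((ℓ:ℝ) + e) = L ^ (ℓ:ℕ) * L ^ e := by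
          rw [Real.rpow_add hL0, Real.rpow_natCast]
      _ ≤ ((2*A+1 : ℤ) : ℝ) * ((2*B'+1 : ℤ) : ℝ) :=
          mul_le_mul h1 h2 (by positivity) (by positivity)
      _ = ((Finset.Icc (-A) A ×ˢ Finset.Icc (-B') B').card : ℝ) := hc.symm
      _ ≤ (T.card : ℝ) := by exact_mod_cast Finset.card_le_card hsub'
  -- ===== upper bound =====
  set g : ℤ → ℝ := fun a => if a = 0 then L ^ m else L ^ ((n:ℝ)/q) * (((|a| : ℤ):ℝ)) ^ (-s) with hg
  have hg0 : ∀ a, 0 ≤ g a := by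
    intro a; rw [hg]; dsimp only; split
    · positivity
    · positivity
  have hgneg : ∀ a : ℤ, g (-a) = g a := by
    intro a; rw [hg]; simp [neg_eq_zero, abs_neg]
  have hfloor0 : ∀ a, 0 ≤ ⌊g a⌋ := fun a => Int.le_floor.2 (by simpa using hg0 a)
  have hfiber : ∀ a : ℤ, ((T.filter (fun ab => ab.1 = a)).card : ℝ) ≤ 2 * g a + 1 := by
    intro a
    have hsub2 : T.filter (fun ab => ab.1 = a)
        ⊆ (Finset.Icc (-⌊g a⌋) ⌊g a⌋).image (fun b => (a, b)) := by
      rintro ⟨x, b⟩ hmem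
      rw [Finset.mem_filter, hTmem] at hmem
      obtain ⟨hmem, hx⟩ := hmem
      dsimp only at hx
      rw [hS] at hmem
      simp only [Set.mem_setOf_eq] at hmem
      obtain ⟨h1, h2, h3⟩ := hmem
      rw [hx] at h3 ⊢
      rw [Finset.mem_image]
      refine ⟨b, ?_, rfl⟩
      rw [Finset.mem_Icc]
      have hb : ((|b| : ℤ) : ℝ) ≤ g a := by
        by_cases h0 : a = 0
        · rw [hg]; dsimp only; rw [if_pos h0, Int.cast_abs]; exact h2
        · have ha1 : (1:ℝ) ≤ ((|a| : ℤ) : ℝ) := by exact_mod_cast Int.one_le_abs (by omega : a ≠ 0)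
          have h3' : ((|a|:ℤ):ℝ)^p * ((|b|:ℤ):ℝ)^q ≤ L ^ n := by
            calc ((|a|:ℤ):ℝ)^p * ((|b|:ℤ):ℝ)^q = ((|a| ^ p * |b| ^ q : ℤ) : ℝ) := by push_cast; ring
              _ ≤ L ^ n := h3
          have hYq : ((|b|:ℤ):ℝ)^(q:ℕ) ≤ L ^ n / ((|a|:ℤ):ℝ)^p := by
            rw [le_div_iff₀ (by positivity)]
            rw [mul_comm]
            exact h3'
          have idY : (((|b|:ℤ):ℝ)^(q:ℕ)) ^ ((q:ℝ)⁻¹) = ((|b|:ℤ):ℝ) := by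
            rw [← Real.rpow_natCast (((|b|:ℤ):ℝ)) q, ← Real.rpow_mul (by positivity),
              mul_inv_cancel₀ hq0.ne', Real.rpow_one]
          have hY : ((|b|:ℤ):ℝ) ≤ (L ^ n / ((|a|:ℤ):ℝ)^p) ^ ((q:ℝ)⁻¹) := by
            rw [← idY]
            exact Real.rpow_le_rpow (by positivity) hYq (by positivity)
          have hEq : (L ^ n / ((|a|:ℤ):ℝ)^p) ^ ((q:ℝ)⁻¹) = g a := by
            rw [hg]; dsimp only; rw [if_neg h0]
            rw [Real.div_rpow (by positivity) (by positivity),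
              ← Real.rpow_natCast L n, ← Real.rpow_mul hL0.le,
              ← Real.rpow_natCast (((|a|:ℤ):ℝ)) p, ← Real.rpow_mul (by positivity),
              div_eq_mul_inv, ← Real.rpow_neg (by positivity), hs]
            rw [div_eq_mul_inv, div_eq_mul_inv]
          rw [← hEq]
          exact hY
      have : |b| ≤ ⌊g a⌋ := Int.le_floor.2 (by exact_mod_cast hb)
      exact abs_le.mp this
    calc ((T.filter (fun ab => ab.1 = a)).card : ℝ)
        ≤ (((Finset.Icc (-⌊g a⌋) ⌊g a⌋).image (fun b => (a, b))).card : ℝ) := by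
          exact_mod_cast Finset.card_le_card hsub2
      _ ≤ ((Finset.Icc (-⌊g a⌋) ⌊g a⌋).card : ℝ) := by exact_mod_cast Finset.card_image_le
      _ = 2 * (⌊g a⌋ : ℝ) + 1 := by
          rw [Int.card_Icc, ncast _ (by have := hfloor0 a; omega)]
          push_cast; ring
      _ ≤ 2 * g a + 1 := by have := Int.floor_le (g a); linarith
  have hT2 : T.card = ∑ a ∈ Finset.Icc (-A) A, (T.filter (fun ab => ab.1 = a)).card := by
    apply Finset.card_eq_sum_card_fiberwise
    intro ab hab
    have h := Finset.mem_coe.mp (hSsub ((hTmem ab).1 hab))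
    exact (Finset.mem_product.mp h).1
  have hsum1 : (T.card : ℝ) ≤ ∑ a ∈ Finset.Icc (-A) A, (2 * g a + 1) := by
    rw [hT2]
    push_cast
    exact Finset.sum_le_sum fun a _ => hfiber a
  -- split the sum
  have hIcc2 : Finset.Icc (-A) A = Finset.Ico (-A) 0 ∪ Finset.Ico 0 (A+1) := by
    rw [Finset.Ico_union_Ico_eq_Ico (by omega) (by omega)]
    ext x; simp only [Finset.mem_Ico, Finset.mem_Icc]; omega
  have hdisj : Disjoint (Finset.Ico (-A) 0) (Finset.Ico 0 (A+1)) :=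
    Finset.Ico_disjoint_Ico_consecutive _ _ _
  have hneg : ∑ a ∈ Finset.Ico (-A) 0, g a = ∑ a ∈ Finset.Ico (1:ℤ) (A+1), g a := by
    rw [show Finset.Ico (-A) 0 = (Finset.Ico (1:ℤ) (A+1)).image (fun a => -a) from by
      ext x; simp only [Finset.mem_Ico, Finset.mem_image]
      constructor
      · intro hx; exact ⟨-x, by omega, by omega⟩
      · rintro ⟨y, hy, rfl⟩; omega]
    rw [Finset.sum_image (by intro x _ y _ h; exact neg_inj.mp h)]
    exact Finset.sum_congr rfl fun x _ => hgneg x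
  have hins : Finset.Ico (0:ℤ) (A+1) = insert 0 (Finset.Ico 1 (A+1)) := by
    ext x; simp only [Finset.mem_Ico, Finset.mem_insert]; omega
  have hgsum : ∑ a ∈ Finset.Icc (-A) A, g a = g 0 + 2 * ∑ a ∈ Finset.Ico (1:ℤ) (A+1), g a := by
    rw [hIcc2, Finset.sum_union hdisj, hneg, hins, Finset.sum_insert (by simp)]
    ring
  have hpossum : ∑ a ∈ Finset.Ico (1:ℤ) (A+1), g a
      = L ^ ((n:ℝ)/q) * ∑ a ∈ Finset.Ico (1:ℤ) (A+1), ((|a|:ℤ):ℝ) ^ (-s) := by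
    rw [Finset.mul_sum]
    refine Finset.sum_congr rfl fun a ha => ?_
    rw [Finset.mem_Ico] at ha
    rw [hg]; dsimp only; rw [if_neg (by omega)]
  have hznat : ∑ a ∈ Finset.Ico (1:ℤ) (A+1), ((|a|:ℤ):ℝ) ^ (-s)
      = ∑ u ∈ Finset.Icc 1 A.toNat, ((u:ℕ):ℝ) ^ (-s) := by
    rw [show Finset.Ico (1:ℤ) (A+1) = (Finset.Icc 1 A.toNat).image (fun u : ℕ => (u:ℤ)) from by
      ext x; simp only [Finset.mem_Ico, Finset.mem_image, Finset.mem_Icc]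
      constructor
      · intro hx; exact ⟨x.toNat, by omega, by omega⟩
      · rintro ⟨y, hy, rfl⟩; omega]
    rw [Finset.sum_image (by intro x _ y _ h; exact Nat.cast_injective h)]
    refine Finset.sum_congr rfl fun u hu => ?_
    rw [Finset.mem_Icc] at hu
    congr 1
    rw [abs_of_pos (by exact_mod_cast hu.1 : (0:ℤ) < (u:ℤ))]
    push_cast
    ring
  have hsum_le : ∑ u ∈ Finset.Icc 1 A.toNat, ((u:ℕ):ℝ) ^ (-s)
      ≤ 1 + (L ^ (ℓ:ℕ)) ^ (1-s) / (1-s) := by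
    have h1 := sum_rpow_neg_le s hs0.le hs1 A.toNat
    have h2 : ((A.toNat:ℕ):ℝ) ^ (1-s) ≤ (L ^ (ℓ:ℕ)) ^ (1-s) := by
      apply Real.rpow_le_rpow (by positivity) _ (by linarith)
      rw [ncast _ (by omega)]
      exact Int.floor_le _
    have h3 : (0:ℝ) < 1 - s := by linarith
    calc ∑ u ∈ Finset.Icc 1 A.toNat, ((u:ℕ):ℝ) ^ (-s)
        ≤ 1 + ((A.toNat:ℕ):ℝ) ^ (1-s) / (1-s) := h1
      _ ≤ 1 + (L ^ (ℓ:ℕ)) ^ (1-s) / (1-s) := by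
          gcongr
  -- ===== exponent facts and final assembly =====
  have hgz : g 0 = L^(m:ℕ) := by rw [hg]; simp
  have hup : (T.card : ℝ) ≤ (9 + 4/(1-s)) * L^er := by
    have c1 : ∑ a ∈ Finset.Ico (1:ℤ) (A+1), g a
        ≤ L^((n:ℝ)/q) * (1 + (L^(ℓ:ℕ))^(1-s)/(1-s)) := by
      rw [hpossum, hznat]
      exact mul_le_mul_of_nonneg_left hsum_le (by positivity)
    have c2 : ((Finset.Icc (-A) A).card : ℝ) ≤ 2*L^(ℓ:ℕ) + 1 := by
      rw [Int.card_Icc, ncast _ (by omega)]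
      have hAle : (A:ℝ) ≤ L^(ℓ:ℕ) := Int.floor_le _
      push_cast
      linarith
    have c3 : ∑ a ∈ Finset.Icc (-A) A, (2*g a + 1)
        = 2*(∑ a ∈ Finset.Icc (-A) A, g a) + ((Finset.Icc (-A) A).card : ℝ) := by
      rw [Finset.sum_add_distrib, Finset.sum_const, nsmul_eq_mul, mul_one, ← Finset.mul_sum]
    calc (T.card:ℝ) ≤ ∑ a ∈ Finset.Icc (-A) A, (2*g a + 1) := hsum1
      _ = 2*(∑ a ∈ Finset.Icc (-A) A, g a) + ((Finset.Icc (-A) A).card : ℝ) := c3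
      _ ≤ 2*(L^(m:ℕ) + 2*(L^((n:ℝ)/q) * (1 + (L^(ℓ:ℕ))^(1-s)/(1-s)))) + (2*L^(ℓ:ℕ)+1) := by
          rw [hgsum, hgz]
          have hq_nonneg : (0:ℝ) ≤ L^((n:ℝ)/q) := by positivity
          linarith [c1, c2]
      _ ≤ (9 + 4/(1-s)) * L^er := by
          have expand : L^((n:ℝ)/q) * (1 + (L^(ℓ:ℕ))^(1-s)/(1-s))
              = L^((n:ℝ)/q) + (L^((n:ℝ)/q) * (L^(ℓ:ℕ))^(1-s))/(1-s) := by ring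
          rw [expand, bmain]
          have hre : (4:ℝ)/(1-s) * L^er = 4*(L^er/(1-s)) := by ring
          linarith [bm, bq, bl, b1, hre]
  constructor
  · rw [hcard]
    exact hlow
  · rw [hcard]
    exact hup

/-- With `n = p(ℓ-1) + q(m-1) + 2`, `r = ℓ + m + (2-p-q)/q`, and `N(L)` the number of
integer pairs `(a,b)` with `|a| ≤ L^ℓ`, `|b| ≤ L^m`, `|a|^p |b|^q ≤ L^n`, the function
`L ↦ log N(L) / log L` tends to `r` as `L → ∞`. -/
theorem stmt_8 (ℓ m p q : ℕ) (hℓ : 2 ≤ ℓ) (hlm : ℓ < m) (hp : 1 ≤ p) (hpq : p < q)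
    (n : ℕ) (hn : n = p * (ℓ - 1) + q * (m - 1) + 2)
    (r : ℝ) (hr : r = (ℓ : ℝ) + (m : ℝ) + (2 - (p : ℝ) - (q : ℝ)) / (q : ℝ)) :
    Filter.Tendsto (fun L : ℝ =>
        Real.log (Nat.card {ab : ℤ × ℤ | (|ab.1| : ℝ) ≤ L ^ ℓ ∧ (|ab.2| : ℝ) ≤ L ^ m ∧
          ((|ab.1| ^ p * |ab.2| ^ q : ℤ) : ℝ) ≤ L ^ n} : ℝ) / Real.log L)
      Filter.atTop (nhds r) := by
  have hq0 : (0:ℝ) < q := by exact_mod_cast (by omega : 0 < q)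
  have hp0 : (0:ℝ) < p := by exact_mod_cast (by omega : 0 < p)
  have hs1 : (p:ℝ)/(q:ℝ) < 1 := by rw [div_lt_one hq0]; exact_mod_cast hpq
  have hs0 : (0:ℝ) < (p:ℝ)/(q:ℝ) := by positivity
  have e1 : p * (ℓ-1) + p = p * ℓ := by
    have h : ℓ - 1 + 1 = ℓ := by omega
    calc p * (ℓ-1) + p = p * (ℓ - 1 + 1) := by ring
      _ = p * ℓ := by rw [h]
  have e2 : q * (m-1) + q = q * m := by
    have h : m - 1 + 1 = m := by omega
    calc q * (m-1) + q = q * (m - 1 + 1) := by ring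
      _ = q * m := by rw [h]
  have hNcast : (n:ℝ) + p + q = p*ℓ + q*m + 2 := by
    exact_mod_cast congrArg (Nat.cast : ℕ → ℝ) (show n + p + q = p*ℓ + q*m + 2 by omega)
  have hexp1 : (ℓ:ℝ) + ((n:ℝ) - (p:ℝ)*(ℓ:ℝ))/(q:ℝ) = r := by
    rw [hr]; field_simp; linear_combination hNcast
  have hexp2 : (n:ℝ)/(q:ℝ) + (ℓ:ℝ)*(1-(p:ℝ)/(q:ℝ)) = r := by
    rw [hr]; field_simp; linear_combination hNcast
  set C : ℝ := 9 + 4/(1-(p:ℝ)/(q:ℝ)) with hC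
  have hCpos : 0 < C := by
    rw [hC]
    have h4 : 0 < 4/(1-(p:ℝ)/(q:ℝ)) := div_pos (by norm_num) (by linarith)
    linarith
  apply tendsto_of_tendsto_of_tendsto_of_le_of_le'
      (tendsto_const_nhds : Filter.Tendsto (fun _ : ℝ => r) Filter.atTop (nhds r))
      (show Filter.Tendsto (fun L : ℝ => Real.log C / Real.log L + r) Filter.atTop (nhds r) by
        have h1 : Filter.Tendsto (fun L : ℝ => Real.log C / Real.log L) Filter.atTop (nhds 0) :=
          tendsto_const_nhds.div_atTop Real.tendsto_log_atTop
        simpa using h1.add (tendsto_const_nhds : Filter.Tendsto (fun _ : ℝ => r) Filter.atTop (nhds r)))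
  · filter_upwards [Filter.eventually_ge_atTop (2:ℝ)] with L hL
    obtain ⟨h1, _⟩ := count_bounds ℓ m p q n hℓ hlm hp hpq hn L hL
    rw [hexp1] at h1
    have hL0 : (0:ℝ) < L := by linarith
    have hlog : 0 < Real.log L := Real.log_pos (by linarith)
    rw [le_div_iff₀ hlog]
    calc r * Real.log L = Real.log (L ^ r) := (Real.log_rpow hL0 r).symm
      _ ≤ _ := Real.log_le_log (Real.rpow_pos_of_pos hL0 r) h1
  · filter_upwards [Filter.eventually_ge_atTop (2:ℝ)] with L hL
    obtain ⟨h1, h2⟩ := count_bounds ℓ m p q n hℓ hlm hp hpq hn L hL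
    rw [hexp1] at h1
    rw [hexp2] at h2
    have hL0 : (0:ℝ) < L := by linarith
    have hlog : 0 < Real.log L := Real.log_pos (by linarith)
    have hNpos : (0:ℝ) < (Nat.card {ab : ℤ × ℤ | (|ab.1| : ℝ) ≤ L ^ ℓ ∧ (|ab.2| : ℝ) ≤ L ^ m ∧
          ((|ab.1| ^ p * |ab.2| ^ q : ℤ) : ℝ) ≤ L ^ n} : ℝ) :=
      lt_of_lt_of_le (Real.rpow_pos_of_pos hL0 r) h1
    have hNC : Real.log (Nat.card {ab : ℤ × ℤ | (|ab.1| : ℝ) ≤ L ^ ℓ ∧ (|ab.2| : ℝ) ≤ L ^ m ∧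
          ((|ab.1| ^ p * |ab.2| ^ q : ℤ) : ℝ) ≤ L ^ n} : ℝ)
        ≤ Real.log C + r * Real.log L := by
      calc Real.log (Nat.card {ab : ℤ × ℤ | (|ab.1| : ℝ) ≤ L ^ ℓ ∧ (|ab.2| : ℝ) ≤ L ^ m ∧
            ((|ab.1| ^ p * |ab.2| ^ q : ℤ) : ℝ) ≤ L ^ n} : ℝ)
          ≤ Real.log (C * L ^ r) := Real.log_le_log hNpos h2
        _ = Real.log C + Real.log (L ^ r) :=
            Real.log_mul hCpos.ne' (Real.rpow_pos_of_pos hL0 r).ne'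
        _ = Real.log C + r * Real.log L := by rw [Real.log_rpow hL0]
    have heq : (Real.log C / Real.log L + r) * Real.log L = Real.log C + r * Real.log L := by
      field_simp
    rw [div_le_iff₀ hlog, heq]
    exact hNC
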